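/- Let τ₀ : ℝ² → (0,∞) and Q₀ : ℝ² → ℂ_I be smooth, and let g : ℝ² → L be a smooth solution of the g-system ∂_z g = (∂_z(log √τ₀))·g + (Q₀/√τ₀)·J·ĝ·I, ∂_z̄ g = (√τ₀/4)·J·ĝ·I, with |g|² nowhere vanishing. For a constant θ ∈ ℝ, the map e^{iθ}·g (multiplication by the central complex scalar e^{iθ}) satisfies the same g-system if and only if e^{2iθ} = 1, i.e. e^{iθ} = ±1. (Hence a solution of the g-system with prescribed hyperbolic Gauss map and Weierstrass data is determined up to sign.) -/

import Mathlib

/-!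
`ℍ^ℂ` is modelled as `Quaternion ℂ` (complex coefficients on `1, I, J, K`, central complex
unit `i = Complex.I`, `I² = J² = K² = −1`, `I*J = K = −J*I`).  Maps on `ℝ²` are taken on
`ℝ × ℝ`; smoothness and the partial derivatives `∂ₓ`, `∂_y` are meant coefficientwise, and
`qdz f = (1/2)(∂ₓ f − I·∂_y f)`, `qdzbar f = (1/2)(∂ₓ f + I·∂_y f)` (left multiplication
by the quaternion `I`).  `cI` embeds `ℂ` as `ℂ_I = ℝ·1 ⊕ ℝ·I ⊂ ℍ^ℂ`.
-/

noncomputable section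

/-- The quaternion `I`. -/
def Iq : Quaternion ℂ := ⟨0, 1, 0, 0⟩

/-- The quaternion `J`. -/
def Jq : Quaternion ℂ := ⟨0, 0, 1, 0⟩

/-- Coefficientwise complex conjugation `â` on the complex quaternions. -/
def qhat (a : Quaternion ℂ) : Quaternion ℂ :=
  ⟨starRingEnd ℂ a.re, starRingEnd ℂ a.imI, starRingEnd ℂ a.imJ, starRingEnd ℂ a.imK⟩

/-- The embedding of `ℂ` onto `ℂ_I = ℝ·1 ⊕ ℝ·I ⊂ ℍ^ℂ`, sending the complex unit to `I`. -/
def cI (w : ℂ) : Quaternion ℂ := ⟨((w.re : ℝ) : ℂ), ((w.im : ℝ) : ℂ), 0, 0⟩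

/-- The coefficientwise directional derivative of an `ℍ^ℂ`-valued map on `ℝ²`. -/
def qpd (v : ℝ × ℝ) (f : ℝ × ℝ → Quaternion ℂ) (p : ℝ × ℝ) : Quaternion ℂ :=
  ⟨fderiv ℝ (fun s => (f s).re) p v, fderiv ℝ (fun s => (f s).imI) p v,
   fderiv ℝ (fun s => (f s).imJ) p v, fderiv ℝ (fun s => (f s).imK) p v⟩

/-- `∂_z f := (1/2)(∂ₓ f − I·∂_y f)`, with `I·` the left multiplication by `I` in `ℍ^ℂ`. -/
def qdz (f : ℝ × ℝ → Quaternion ℂ) (p : ℝ × ℝ) : Quaternion ℂ :=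
  (2 : ℂ)⁻¹ • (qpd (1, 0) f p - Iq * qpd (0, 1) f p)

/-- `∂_z̄ f := (1/2)(∂ₓ f + I·∂_y f)`. -/
def qdzbar (f : ℝ × ℝ → Quaternion ℂ) (p : ℝ × ℝ) : Quaternion ℂ :=
  (2 : ℂ)⁻¹ • (qpd (1, 0) f p + Iq * qpd (0, 1) f p)

/-- Smoothness (coefficientwise) of an `ℍ^ℂ`-valued map on `ℝ²`. -/
def QSmooth (f : ℝ × ℝ → Quaternion ℂ) : Prop :=
  ContDiff ℝ (⊤ : ℕ∞) (fun p => (f p).re) ∧ ContDiff ℝ (⊤ : ℕ∞) (fun p => (f p).imI) ∧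
  ContDiff ℝ (⊤ : ℕ∞) (fun p => (f p).imJ) ∧ ContDiff ℝ (⊤ : ℕ∞) (fun p => (f p).imK)

/-- The real-valued function `r`, regarded as `ℂ_I`-valued (i.e. `ℍ^ℂ`-valued). -/
def rQ (r : ℝ) : Quaternion ℂ := ⟨((r : ℝ) : ℂ), 0, 0, 0⟩

/-- `L := {(1/2)(1+iI)(a+bJ) : a, b ∈ ℂ} ⊂ ℍ^ℂ`. -/
def Lset : Set (Quaternion ℂ) :=
  {g | ∃ a b : ℂ, g = (2 : ℂ)⁻¹ •
    ((⟨1, Complex.I, 0, 0⟩ : Quaternion ℂ) * (⟨a, 0, b, 0⟩ : Quaternion ℂ))}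

/-- For `g = (1/2)(1+iI)(a+bJ) ∈ L` (so that `a = 2·g.re`, `b = 2·g.imJ`), the squared norm
`|g|² := |a|² − |b|²`. -/
def LnormSq (g : Quaternion ℂ) : ℝ :=
  Complex.normSq (2 * g.re) - Complex.normSq (2 * g.imJ)

/-- The `g`-system: `∂_z g = (∂_z log √τ₀)·g + (Q₀/√τ₀)·J·ĝ·I` and
`∂_z̄ g = (√τ₀/4)·J·ĝ·I`, with the `ℂ_I`-valued Weierstrass data `(Q₀, τ₀)`. -/
def GSystem (τ₀ : ℝ × ℝ → ℝ) (Q₀ : ℝ × ℝ → ℂ) (g : ℝ × ℝ → Quaternion ℂ) : Prop :=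
  ∀ p : ℝ × ℝ,
    qdz g p = qdz (fun s => rQ (Real.log (Real.sqrt (τ₀ s)))) p * g p
        + (Real.sqrt (τ₀ p))⁻¹ • (cI (Q₀ p) * (Jq * qhat (g p) * Iq)) ∧
    qdzbar g p = (Real.sqrt (τ₀ p) / 4) • (Jq * qhat (g p) * Iq)

/-! ### Auxiliary lemmas -/

lemma mul_smulq (c : ℂ) (x y : Quaternion ℂ) : x * c • y = c • (x * y) :=
  Algebra.mul_smul_comm c x y

lemma smulq_mul (c : ℂ) (x y : Quaternion ℂ) : (c • x) * y = c • (x * y) :=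
  Algebra.smul_mul_assoc c x y

lemma subq_smul (a b : ℂ) (x : Quaternion ℂ) : (a - b) • x = a • x - b • x :=
  sub_smul a b x

lemma smulq_eq_zero (a : ℂ) (x : Quaternion ℂ) : a • x = 0 ↔ a = 0 ∨ x = 0 := by
  constructor
  · intro h
    by_cases ha : a = 0
    · exact Or.inl ha
    · refine Or.inr ?_
      rw [Quaternion.ext_iff] at h ⊢
      simp only [Quaternion.re_smul, Quaternion.imI_smul, Quaternion.imJ_smul,
        Quaternion.imK_smul, smul_eq_mul, Quaternion.re_zero, Quaternion.imI_zero,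
        Quaternion.imJ_zero, Quaternion.imK_zero, mul_eq_zero, ha, false_or] at h
      exact h
  · rintro (rfl | rfl)
    · exact zero_smul ℂ x
    · exact smul_zero a

lemma JxI (x : Quaternion ℂ) : Jq * x * Iq = ⟨-x.imK, -x.imJ, -x.imI, -x.re⟩ := by
  ext <;> simp [Quaternion.re_mul, Quaternion.imI_mul, Quaternion.imJ_mul,
    Quaternion.imK_mul] <;> simp [Jq, Iq]

lemma JxI_ne_zero {x : Quaternion ℂ} (hx : x ≠ 0) : Jq * x * Iq ≠ 0 := by
  rw [JxI]
  intro h0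
  apply hx
  have h0 := Quaternion.ext_iff.mp h0
  rw [Quaternion.ext_iff]
  simp only [Quaternion.re_zero, Quaternion.imI_zero, Quaternion.imJ_zero,
    Quaternion.imK_zero, neg_eq_zero] at h0 ⊢
  tauto

lemma qhat_smul (c : ℂ) (q : Quaternion ℂ) :
    qhat (c • q) = (starRingEnd ℂ c) • qhat q := by
  ext <;> simp [qhat, Quaternion.re_smul, Quaternion.imI_smul, Quaternion.imJ_smul,
    Quaternion.imK_smul] <;> rfl

lemma qhat_ne_zero {q : Quaternion ℂ} (hq : q ≠ 0) : qhat q ≠ 0 := by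
  intro h0
  apply hq
  rw [Quaternion.ext_iff] at h0 ⊢
  simp only [qhat, Quaternion.re_zero, Quaternion.imI_zero, Quaternion.imJ_zero,
    Quaternion.imK_zero, map_eq_zero] at h0 ⊢
  exact h0

lemma qpd_smul (c : ℂ) (f : ℝ × ℝ → Quaternion ℂ) (hf : QSmooth f) (v p) :
    qpd v (fun s => c • f s) p = c • qpd v f p := by
  obtain ⟨h1, h2, h3, h4⟩ := hf
  ext <;>
  simp only [qpd, Quaternion.re_smul, Quaternion.imI_smul, Quaternion.imJ_smul,
    Quaternion.imK_smul, smul_eq_mul]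
  · rw [fderiv_const_mul (h1.differentiable (by norm_num)).differentiableAt]; simp; rfl
  · rw [fderiv_const_mul (h2.differentiable (by norm_num)).differentiableAt]; simp; rfl
  · rw [fderiv_const_mul (h3.differentiable (by norm_num)).differentiableAt]; simp; rfl
  · rw [fderiv_const_mul (h4.differentiable (by norm_num)).differentiableAt]; simp; rfl

lemma qdz_smul (c : ℂ) (f : ℝ × ℝ → Quaternion ℂ) (hf : QSmooth f) (p) :
    qdz (fun s => c • f s) p = c • qdz f p := by
  simp only [qdz, qpd_smul c f hf, mul_smulq, smul_sub, smul_comm ((2:ℂ)⁻¹) c]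

lemma qdzbar_smul (c : ℂ) (f : ℝ × ℝ → Quaternion ℂ) (hf : QSmooth f) (p) :
    qdzbar (fun s => c • f s) p = c • qdzbar f p := by
  simp only [qdzbar, qpd_smul c f hf, mul_smulq, smul_add, smul_comm ((2:ℂ)⁻¹) c]

/-- Let `g : ℝ² → L` be a smooth solution of the `g`-system with `|g|²`
nowhere vanishing, for smooth data `τ₀ : ℝ² → (0,∞)`, `Q₀ : ℝ² → ℂ_I`.  For a constant
`θ ∈ ℝ`, the map `e^{iθ}·g` satisfies the same `g`-system if and only if `e^{2iθ} = 1`,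
i.e. `e^{iθ} = ±1`; hence a solution with prescribed hyperbolic Gauss map and Weierstrass
data is determined up to sign. -/
theorem stmt12 (τ₀ : ℝ × ℝ → ℝ) (Q₀ : ℝ × ℝ → ℂ)
    (hτ : ContDiff ℝ (⊤ : ℕ∞) τ₀) (hτpos : ∀ p, 0 < τ₀ p)
    (hQ : ContDiff ℝ (⊤ : ℕ∞) Q₀)
    (g : ℝ × ℝ → Quaternion ℂ) (hgs : QSmooth g) (hgL : ∀ p, g p ∈ Lset)
    (hgnz : ∀ p, LnormSq (g p) ≠ 0) (hsys : GSystem τ₀ Q₀ g) (θ : ℝ) :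
    (GSystem τ₀ Q₀ (fun p => Complex.exp ((θ : ℂ) * Complex.I) • g p) ↔
      Complex.exp (2 * (θ : ℂ) * Complex.I) = 1) ∧
    (Complex.exp (2 * (θ : ℂ) * Complex.I) = 1 ↔
      Complex.exp ((θ : ℂ) * Complex.I) = 1 ∨ Complex.exp ((θ : ℂ) * Complex.I) = -1) := by
  set c : ℂ := Complex.exp ((θ : ℂ) * Complex.I) with hc
  have hconj : starRingEnd ℂ c = Complex.exp (-((θ : ℂ) * Complex.I)) := by
    rw [hc, ← Complex.exp_conj]
    congr 1
    simp [map_mul, Complex.conj_ofReal, Complex.conj_I]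
  have hcc : c * starRingEnd ℂ c = 1 := by
    rw [hconj, ← Complex.exp_add, add_neg_cancel, Complex.exp_zero]
  have hsq : Complex.exp (2 * (θ : ℂ) * Complex.I) = c * c := by
    rw [hc, ← Complex.exp_add]; ring_nf
  constructor
  · constructor
    · intro h
      set p : ℝ × ℝ := (0, 0)
      have hgp : g p ≠ 0 := by
        intro h0
        exact hgnz p (by simp [LnormSq, h0, Quaternion.re_zero, Quaternion.imJ_zero])
      have hB : Jq * qhat (g p) * Iq ≠ 0 := JxI_ne_zero (qhat_ne_zero hgp)
      have h2 := (h p).2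
      rw [qdzbar_smul _ _ hgs, (hsys p).2, qhat_smul, mul_smulq, smulq_mul] at h2
      set B : Quaternion ℂ := Jq * qhat (g p) * Iq
      set t : ℝ := Real.sqrt (τ₀ p) / 4 with ht
      have htne : ((t : ℝ) : ℂ) ≠ 0 := by
        simp only [ne_eq, Complex.ofReal_eq_zero, ht, div_eq_zero_iff]
        push_neg
        exact ⟨(Real.sqrt_pos.mpr (hτpos p)).ne', by norm_num⟩
      have hB' : (((t : ℝ) : ℂ) * c) • B = (((t : ℝ) : ℂ) * starRingEnd ℂ c) • B := by
        have e : ∀ y : Quaternion ℂ, ((t : ℝ) : ℂ) • y = t • y := fun y => by ext <;> simp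
        rw [mul_smul, mul_smul, e, e, smul_comm]
        exact h2
      have h4 : ((((t : ℝ) : ℂ) * c - ((t : ℝ) : ℂ) * starRingEnd ℂ c)) • B = 0 := by
        rw [subq_smul, hB', sub_self]
      rcases (smulq_eq_zero _ _).mp h4 with h5 | h5
      · have h6 : c = starRingEnd ℂ c := by
          have := sub_eq_zero.mp h5
          exact mul_left_cancel₀ htne this
        rw [hsq]
        calc c * c = c * starRingEnd ℂ c := by rw [← h6]
          _ = 1 := hcc
      · exact absurd h5 hB
    · intro h
      have hc' : starRingEnd ℂ c = c := by
        rcases mul_self_eq_one_iff.mp (hsq ▸ h) with h1 | h1 <;> rw [h1] <;> simp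
      intro p
      obtain ⟨e1, e2⟩ := hsys p
      constructor
      · rw [qdz_smul _ _ hgs, e1, qhat_smul, hc']
        simp only [smul_add, mul_smulq, smulq_mul, smul_comm c]
      · rw [qdzbar_smul _ _ hgs, e2, qhat_smul, hc']
        simp only [mul_smulq, smulq_mul, smul_comm c]
  · rw [hsq, mul_self_eq_one_iff]
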